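/- arXiv:2105.03911 — 2 statements merged into one kernel-verified Lean document; each statement's English description precedes it below -/
import Mathlib

section
/- Let f : Γ_+ → ℝ be smooth, symmetric, positive, and 1-homogeneous. Then f is inverse concave (i.e. f_* is concave on Γ_+) if and only if for every κ ∈ Γ_+ the symmetric n×n matrix with entries (∂²f/∂κ_k∂κ_l)(κ) + 2·((∂f/∂κ_k)(κ)/κ_k)·δ_{kl} is positive semidefinite. -/
open Finset

/-- The positive cone `Γ₊ = {κ ∈ ℝⁿ : κᵢ > 0 for all i}`. -/
def PosCone (n : ℕ) : Set (Fin n → ℝ) := {κ | ∀ i, 0 < κ i}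

/-- The first partial derivative `∂f/∂κ_k` at `x`. -/
noncomputable def pd1 {n : ℕ} (f : (Fin n → ℝ) → ℝ) (k : Fin n) (x : Fin n → ℝ) : ℝ :=
  fderiv ℝ f x (Pi.single k 1)

/-- The second partial derivative `∂²f/∂κ_k∂κ_l` at `x`. -/
noncomputable def pd2 {n : ℕ} (f : (Fin n → ℝ) → ℝ) (k l : Fin n) (x : Fin n → ℝ) : ℝ :=
  fderiv ℝ (fun y => fderiv ℝ f y (Pi.single k 1)) x (Pi.single l 1)

/-- The dual function `f_*(τ) = f(τ₁⁻¹, …, τₙ⁻¹)⁻¹`. -/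
noncomputable def dualF {n : ℕ} (f : (Fin n → ℝ) → ℝ) (τ : Fin n → ℝ) : ℝ :=
  (f (fun i => (τ i)⁻¹))⁻¹

set_option linter.unusedSectionVars false
set_option linter.unusedVariables false

lemma posCone_isOpen (n : ℕ) : IsOpen (PosCone n) := by
  have : PosCone n = Set.pi Set.univ (fun _ => Set.Ioi (0:ℝ)) := by
    ext κ; simp [PosCone, Set.mem_pi]
  rw [this]
  exact isOpen_set_pi Set.finite_univ (fun i _ => isOpen_Ioi)

lemma posCone_convex (n : ℕ) : Convex ℝ (PosCone n) := by
  have : PosCone n = Set.pi Set.univ (fun _ => Set.Ioi (0:ℝ)) := by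
    ext κ; simp [PosCone, Set.mem_pi]
  rw [this]
  exact convex_pi (fun i _ => convex_Ioi 0)

lemma inv_mem_posCone {n : ℕ} {κ : Fin n → ℝ} (h : κ ∈ PosCone n) :
    (fun i => (κ i)⁻¹) ∈ PosCone n := fun i => inv_pos.2 (h i)

lemma clm_apply_eq_sum {n : ℕ} (φ : (Fin n → ℝ) →L[ℝ] ℝ) (w : Fin n → ℝ) :
    φ w = ∑ k, w k * φ (Pi.single k 1) := by
  conv_lhs => rw [← Finset.univ_sum_single w]
  rw [map_sum]
  refine Finset.sum_congr rfl fun k _ => ?_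
  have : Pi.single k (w k) = w k • (Pi.single k 1 : Fin n → ℝ) := by
    ext i; by_cases h : i = k <;> simp [h, Pi.single_apply]
  rw [this, map_smul, smul_eq_mul]

lemma deriv_nonpos_of_antitoneOn {ψ : ℝ → ℝ} {I : Set ℝ} {d : ℝ} (hI : I ∈ nhds (0:ℝ))
    (h : AntitoneOn ψ I) (hd : HasDerivAt ψ d 0) : d ≤ 0 := by
  have h0 : (0:ℝ) ∈ I := mem_of_mem_nhds hI
  rw [hasDerivAt_iff_tendsto_slope] at hd
  have hmono : nhdsWithin (0:ℝ) (Set.Ioi 0) ≤ nhdsWithin (0:ℝ) {(0:ℝ)}ᶜ :=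
    nhdsWithin_mono _ (fun t ht => ne_of_gt ht)
  refine le_of_tendsto (hd.mono_left hmono) ?_
  filter_upwards [self_mem_nhdsWithin,
    eventually_nhdsWithin_of_eventually_nhds (p := fun t => t ∈ I) hI] with t ht htI
  have ht0 : (0:ℝ) < t := ht
  have : ψ t ≤ ψ 0 := h h0 htI ht0.le
  have : slope ψ 0 t = (ψ t - ψ 0) / t := by simp [slope_def_field, div_eq_iff ht0.ne', sub_zero]
  rw [this]
  exact div_nonpos_of_nonpos_of_nonneg (by linarith) ht0.le


section Hess
variable {E : Type*} [NormedAddCommGroup E] [NormedSpace ℝ E]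

lemma hasDerivAt_line {g : E → ℝ} {x v : E} {t : ℝ} (hg : DifferentiableAt ℝ g (x + t • v)) :
    HasDerivAt (fun u => g (x + u • v)) (fderiv ℝ g (x + t • v) v) t := by
  have hL : HasDerivAt (fun u : ℝ => x + u • v) v t := by
    simpa using ((hasDerivAt_id t).smul_const v).const_add x
  simpa [Function.comp_def] using hg.hasFDerivAt.comp_hasDerivAt t hL

lemma concaveOn_iff_hess {s : Set E} (hso : IsOpen s) (hsc : Convex ℝ s)
    {g : E → ℝ} (hg : ContDiffOn ℝ (⊤ : ℕ∞) g s) :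
    ConcaveOn ℝ s g ↔ ∀ x ∈ s, ∀ v : E, fderiv ℝ (fun y => fderiv ℝ g y v) x v ≤ 0 := by
  have h1top : ((⊤ : ℕ∞) : WithTop ℕ∞) ≠ 0 := by simp
  have haddtop : ((⊤ : ℕ∞) : WithTop ℕ∞) + 1 ≤ ((⊤ : ℕ∞) : WithTop ℕ∞) := by
    exact_mod_cast le_top
  have hgat : ∀ x ∈ s, ContDiffAt ℝ (⊤ : ℕ∞) g x := fun x hx =>
    hg.contDiffAt (hso.mem_nhds hx)
  have hgd : ∀ x ∈ s, DifferentiableAt ℝ g x := fun x hx =>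
    (hgat x hx).differentiableAt h1top
  have hdd : ∀ x ∈ s, ∀ v : E, DifferentiableAt ℝ (fun y => fderiv ℝ g y v) x := by
    intro x hx v
    have h1 : ContDiffAt ℝ (⊤ : ℕ∞) (fderiv ℝ g) x := (hgat x hx).fderiv_right haddtop
    exact (h1.differentiableAt h1top).clm_apply (differentiableAt_const v)
  constructor
  · intro hcon x hx v
    set I : Set ℝ := {t : ℝ | x + t • v ∈ s} with hIdef
    have hIo : IsOpen I := hso.preimage (by fun_prop)
    have h0I : (0 : ℝ) ∈ I := by simp [hIdef, hx]
    have hmem : ∀ t ∈ I, x + t • v ∈ s := fun t ht => ht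
    have hφd : ∀ t ∈ I, HasDerivAt (fun u => g (x + u • v)) (fderiv ℝ g (x + t • v) v) t :=
      fun t ht => hasDerivAt_line (hgd _ (hmem t ht))
    have key : ∀ a b p q : ℝ, p + q = 1 →
        x + (p * a + q * b) • v = p • (x + a • v) + q • (x + b • v) := by
      intro a b p q hpq
      have hp1 : p = 1 - q := by linarith
      subst hp1; module
    have hIc : Convex ℝ I := by
      intro a ha b hb p q hp hq hpq
      show x + (p • a + q • b) • v ∈ s
      simp only [smul_eq_mul]
      rw [key a b p q hpq]
      exact hsc (hmem a ha) (hmem b hb) hp hq hpq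
    have hφcon : ConcaveOn ℝ I (fun u => g (x + u • v)) := by
      refine ⟨hIc, fun a ha b hb p q hp hq hpq => ?_⟩
      have h2 := hcon.2 (hmem a ha) (hmem b hb) hp hq hpq
      show p • g (x + a • v) + q • g (x + b • v) ≤ g (x + (p • a + q • b) • v)
      simp only [smul_eq_mul]
      rw [key a b p q hpq]
      simpa using h2
    have hanti : AntitoneOn (fun t => fderiv ℝ g (x + t • v) v) I := by
      have h3 := hφcon.antitoneOn_deriv (fun t ht => (hφd t ht).differentiableAt)
      intro a ha b hb hab
      have ea := (hφd a ha).deriv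
      have eb := (hφd b hb).deriv
      simp only [← ea, ← eb]
      exact h3 ha hb hab
    have hψd : HasDerivAt (fun t : ℝ => fderiv ℝ g (x + t • v) v)
        (fderiv ℝ (fun y => fderiv ℝ g y v) x v) (0:ℝ) := by
      have h4 := hasDerivAt_line (g := fun y => fderiv ℝ g y v) (x := x) (v := v) (t := (0:ℝ))
        (by simpa using hdd x hx v)
      simpa using h4
    exact deriv_nonpos_of_antitoneOn (hIo.mem_nhds h0I) hanti hψd
  · intro hH
    refine ⟨hsc, fun x hx y hy p q hp hq hpq => ?_⟩
    set v : E := y - x with hvdef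
    set I : Set ℝ := {t : ℝ | x + t • v ∈ s} with hIdef
    have hIo : IsOpen I := hso.preimage (by fun_prop)
    have h0I : (0 : ℝ) ∈ I := by simp [hIdef, hx]
    have h1I : (1 : ℝ) ∈ I := by simp [hIdef, hvdef, hy]
    have hmem : ∀ t ∈ I, x + t • v ∈ s := fun t ht => ht
    have key : ∀ a b p' q' : ℝ, p' + q' = 1 →
        x + (p' * a + q' * b) • v = p' • (x + a • v) + q' • (x + b • v) := by
      intro a b p' q' hpq'
      have hp1 : p' = 1 - q' := by linarith
      subst hp1; module
    have hIc : Convex ℝ I := by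
      intro a ha b hb p' q' hp' hq' hpq'
      show x + (p' • a + q' • b) • v ∈ s
      simp only [smul_eq_mul]
      rw [key a b p' q' hpq']
      exact hsc (hmem a ha) (hmem b hb) hp' hq' hpq'
    have hintI : interior I = I := hIo.interior_eq
    have hφd : ∀ t ∈ I, HasDerivAt (fun u => g (x + u • v)) (fderiv ℝ g (x + t • v) v) t :=
      fun t ht => hasDerivAt_line (hgd _ (hmem t ht))
    have hφcon : ConcaveOn ℝ I (fun u => g (x + u • v)) := by
      refine concaveOn_of_hasDerivWithinAt2_nonpos hIc
        (f' := fun t => fderiv ℝ g (x + t • v) v)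
        (f'' := fun t => fderiv ℝ (fun y => fderiv ℝ g y v) (x + t • v) v)
        ?_ ?_ ?_ ?_
      · exact fun t ht => ((hφd t ht).continuousAt).continuousWithinAt
      · rw [hintI]; exact fun t ht => (hφd t ht).hasDerivWithinAt
      · rw [hintI]
        intro t ht
        exact (hasDerivAt_line (g := fun y => fderiv ℝ g y v)
          (hdd _ (hmem t ht) v)).hasDerivWithinAt
      · rw [hintI]; exact fun t ht => hH _ (hmem t ht) v
    have h5 := hφcon.2 h0I h1I hp hq hpq
    have e1 : x + (p • (0:ℝ) + q • 1) • v = p • x + q • y := by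
      have hp1 : p = 1 - q := by linarith
      subst hp1; simp [hvdef]; module
    simp only [smul_eq_mul] at h5 e1 ⊢
    rw [← e1]
    simpa [hvdef] using h5
end Hess

lemma h2top : minSmoothness ℝ 2 ≤ ((⊤ : ℕ∞) : WithTop ℕ∞) := by
  rw [minSmoothness_of_isRCLikeNormedField]
  rw [show (2 : WithTop ℕ∞) = ((2:ℕ∞) : WithTop ℕ∞) from rfl]
  exact_mod_cast (le_top : (2:ℕ∞) ≤ ⊤)

lemma h1top : ((⊤ : ℕ∞) : WithTop ℕ∞) ≠ 0 := by simp
lemma haddtop : ((⊤ : ℕ∞) : WithTop ℕ∞) + 1 ≤ ((⊤ : ℕ∞) : WithTop ℕ∞) := by exact_mod_cast le_top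

section Deriv
variable {n : ℕ} {f : (Fin n → ℝ) → ℝ}
variable (hsmooth : ContDiffOn ℝ (⊤ : ℕ∞) f (PosCone n))
include hsmooth

lemma f_contDiffAt {x : Fin n → ℝ} (hx : x ∈ PosCone n) : ContDiffAt ℝ (⊤ : ℕ∞) f x :=
  hsmooth.contDiffAt ((posCone_isOpen n).mem_nhds hx)
lemma f_diffAt {x : Fin n → ℝ} (hx : x ∈ PosCone n) : DifferentiableAt ℝ f x :=
  (f_contDiffAt hsmooth hx).differentiableAt h1top
omit hsmooth in
lemma fderiv_f_apply (x w : Fin n → ℝ) :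
    fderiv ℝ f x w = ∑ k, w k * pd1 f k x := clm_apply_eq_sum _ w
lemma pd1_diffAt (k : Fin n) {x : Fin n → ℝ} (hx : x ∈ PosCone n) :
    DifferentiableAt ℝ (fun y => fderiv ℝ f y (Pi.single k 1)) x := by
  have h1 : ContDiffAt ℝ (⊤ : ℕ∞) (fderiv ℝ f) x := (f_contDiffAt hsmooth hx).fderiv_right haddtop
  exact (h1.differentiableAt h1top).clm_apply (differentiableAt_const _)
omit hsmooth in
lemma fderiv_pd1_apply (k : Fin n) (x w : Fin n → ℝ) :
    fderiv ℝ (fun y => fderiv ℝ f y (Pi.single k 1)) x w = ∑ l, w l * pd2 f k l x :=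
  clm_apply_eq_sum _ w

lemma pd2_symm (k l : Fin n) {x : Fin n → ℝ} (hx : x ∈ PosCone n) :
    pd2 f k l x = pd2 f l k x := by
  have hsy : IsSymmSndFDerivAt ℝ f x := (f_contDiffAt hsmooth hx).isSymmSndFDerivAt h2top
  have h1 : ContDiffAt ℝ (⊤ : ℕ∞) (fderiv ℝ f) x := (f_contDiffAt hsmooth hx).fderiv_right haddtop
  have hd : DifferentiableAt ℝ (fderiv ℝ f) x := h1.differentiableAt h1top
  have key : ∀ a b : Fin n → ℝ, fderiv ℝ (fun y => fderiv ℝ f y a) x b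
      = fderiv ℝ (fderiv ℝ f) x b a := by
    intro a b
    rw [fderiv_clm_apply hd (differentiableAt_const a)]
    simp
  unfold pd2
  rw [key, key, hsy.eq]

variable (hhom : ∀ t : ℝ, 0 < t → ∀ κ ∈ PosCone n, f (t • κ) = t * f κ)
include hhom

lemma euler1 {x : Fin n → ℝ} (hx : x ∈ PosCone n) : fderiv ℝ f x x = f x := by
  have hm : HasDerivAt (fun t : ℝ => t • x) x 1 := by
    simpa using (hasDerivAt_id (1:ℝ)).smul_const x
  have hfd : HasFDerivAt f (fderiv ℝ f x) ((fun t : ℝ => t • x) 1) := by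
    simpa using (f_diffAt hsmooth hx).hasFDerivAt
  have hc : HasDerivAt (fun t : ℝ => f (t • x)) (fderiv ℝ f x x) 1 := by
    simpa [Function.comp_def] using hfd.comp_hasDerivAt (1:ℝ) hm
  have heq : (fun t : ℝ => f (t • x)) =ᶠ[nhds (1:ℝ)] fun t => t * f x := by
    filter_upwards [eventually_gt_nhds (by norm_num : (0:ℝ) < 1)] with t ht
    exact hhom t ht x hx
  have h2 : HasDerivAt (fun t : ℝ => t * f x) (f x) 1 := by
    simpa using (hasDerivAt_id (1:ℝ)).mul_const (f x)
  have := hc.deriv ▸ (heq.deriv_eq.trans h2.deriv)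
  linarith [this]

lemma euler2 (k : Fin n) {x : Fin n → ℝ} (hx : x ∈ PosCone n) :
    fderiv ℝ (fun y => fderiv ℝ f y (Pi.single k 1)) x x = 0 := by
  have hm : HasDerivAt (fun t : ℝ => t • x) x 1 := by
    simpa using (hasDerivAt_id (1:ℝ)).smul_const x
  have hfd : HasFDerivAt (fun y => fderiv ℝ f y (Pi.single k 1))
      (fderiv ℝ (fun y => fderiv ℝ f y (Pi.single k 1)) x) ((fun t : ℝ => t • x) 1) := by
    simpa using (pd1_diffAt hsmooth k hx).hasFDerivAt
  have hc : HasDerivAt (fun t : ℝ => fderiv ℝ f (t • x) (Pi.single k 1))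
      (fderiv ℝ (fun y => fderiv ℝ f y (Pi.single k 1)) x x) 1 := by
    simpa [Function.comp_def] using hfd.comp_hasDerivAt (1:ℝ) hm
  -- the function is locally constant
  have hconst : ∀ t : ℝ, 0 < t → fderiv ℝ f (t • x) (Pi.single k 1)
      = fderiv ℝ f x (Pi.single k 1) := by
    intro t ht
    have htx : t • x ∈ PosCone n := fun i => by
      have := hx i; simpa using mul_pos ht this
    have heq : (fun y => f (t • y)) =ᶠ[nhds x] (fun y => t * f y) := by
      filter_upwards [(posCone_isOpen n).mem_nhds hx] with y hy
      exact hhom t ht y hy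
    have hl : HasFDerivAt (fun y => f (t • y))
        ((fderiv ℝ f (t • x)).comp (t • ContinuousLinearMap.id ℝ (Fin n → ℝ))) x := by
      have hsm : HasFDerivAt (fun y : Fin n → ℝ => t • y)
          (t • ContinuousLinearMap.id ℝ (Fin n → ℝ)) x :=
        (hasFDerivAt_id x).const_smul t
      have hf2 : HasFDerivAt f (fderiv ℝ f (t • x)) ((fun y : Fin n → ℝ => t • y) x) :=
        (f_diffAt hsmooth htx).hasFDerivAt
      simpa [Function.comp_def] using hf2.comp x hsm
    have hr : HasFDerivAt (fun y => t * f y) (t • fderiv ℝ f x) x := by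
      simpa [Pi.smul_def] using (f_diffAt hsmooth hx).hasFDerivAt.const_smul t
    have hle : fderiv ℝ (fun y => f (t • y)) x = fderiv ℝ (fun y => t * f y) x :=
      Filter.EventuallyEq.fderiv_eq heq
    have e1 := hl.fderiv
    have e2 := hr.fderiv
    rw [e1, e2] at hle
    have := congrArg (fun φ => φ (Pi.single k 1)) hle
    simp only [ContinuousLinearMap.coe_comp', Function.comp_apply,
      ContinuousLinearMap.smul_apply, ContinuousLinearMap.coe_smul',
      Pi.smul_apply, ContinuousLinearMap.coe_id', id_eq, smul_eq_mul] at this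
    rw [map_smul, smul_eq_mul] at this
    exact mul_left_cancel₀ (ne_of_gt ht) this
  have heq2 : (fun t : ℝ => fderiv ℝ f (t • x) (Pi.single k 1))
      =ᶠ[nhds (1:ℝ)] (fun _ => fderiv ℝ f x (Pi.single k 1)) := by
    filter_upwards [eventually_gt_nhds (by norm_num : (0:ℝ) < 1)] with t ht
    exact hconst t ht
  have := hc.deriv ▸ (heq2.deriv_eq.trans (deriv_const _ _))
  linarith [this]


end Deriv

section Dual
variable {n : ℕ} {f : (Fin n → ℝ) → ℝ}

noncomputable def ivf {n : ℕ} (σ : Fin n → ℝ) : Fin n → ℝ := fun i => (σ i)⁻¹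
@[simp] lemma ivf_apply {n : ℕ} (σ : Fin n → ℝ) (i : Fin n) : ivf σ i = (σ i)⁻¹ := rfl
lemma ivf_mem {σ : Fin n → ℝ} (h : σ ∈ PosCone n) : ivf σ ∈ PosCone n :=
  fun i => inv_pos.2 (h i)
lemma ivf_ivf (σ : Fin n → ℝ) : ivf (ivf σ) = σ := funext fun i => inv_inv _

variable (hsmooth : ContDiffOn ℝ (⊤ : ℕ∞) f (PosCone n))
    (hpos : ∀ κ ∈ PosCone n, 0 < f κ)
include hsmooth hpos

omit hpos in
lemma comp_ivf_contDiffOn : ContDiffOn ℝ (⊤ : ℕ∞) (fun σ => f (ivf σ)) (PosCone n) := by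
  refine hsmooth.comp ?_ (fun σ hσ => ivf_mem hσ)
  rw [contDiffOn_pi]
  intro i
  exact ((ContinuousLinearMap.proj i : (Fin n → ℝ) →L[ℝ] ℝ).contDiff.contDiffOn).inv
    (fun σ hσ => ne_of_gt (hσ i))

lemma dualF_contDiffOn : ContDiffOn ℝ (⊤ : ℕ∞) (dualF f) (PosCone n) := by
  have h1 := (comp_ivf_contDiffOn hsmooth).inv
    (fun σ hσ => ne_of_gt (hpos _ (ivf_mem hσ)))
  exact h1

lemma fderiv_dual_apply {σ : Fin n → ℝ} (hσ : σ ∈ PosCone n) (v : Fin n → ℝ) :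
    fderiv ℝ (dualF f) σ v
      = -((f (ivf σ)) ^ 2)⁻¹ * ∑ k, (-((σ k) ^ 2)⁻¹ * v k) * pd1 f k (ivf σ) := by
  have hσ0 : ∀ i, σ i ≠ 0 := fun i => ne_of_gt (hσ i)
  set D : (Fin n → ℝ) →L[ℝ] (Fin n → ℝ) :=
    ContinuousLinearMap.pi (fun i => (-((σ i) ^ 2)⁻¹) • ContinuousLinearMap.proj i) with hD
  have h1 : HasFDerivAt (ivf : (Fin n → ℝ) → Fin n → ℝ) D σ := by
    rw [show (ivf : (Fin n → ℝ) → Fin n → ℝ) = fun σ i => (σ i)⁻¹ from rfl]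
    rw [hasFDerivAt_pi]
    intro i
    exact (hasDerivAt_inv (hσ0 i)).comp_hasFDerivAt σ
      (ContinuousLinearMap.proj i : (Fin n → ℝ) →L[ℝ] ℝ).hasFDerivAt
  have h2 : HasFDerivAt f (fderiv ℝ f (ivf σ)) (ivf σ) :=
    (f_diffAt hsmooth (ivf_mem hσ)).hasFDerivAt
  have h3 : HasFDerivAt (fun σ => f (ivf σ)) ((fderiv ℝ f (ivf σ)).comp D) σ := by
    simpa [Function.comp_def] using h2.comp σ h1
  have h4 : HasDerivAt (fun y : ℝ => y⁻¹) (-((f (ivf σ)) ^ 2)⁻¹) (f (ivf σ)) :=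
    hasDerivAt_inv (ne_of_gt (hpos _ (ivf_mem hσ)))
  have h5 : HasFDerivAt (dualF f)
      ((-((f (ivf σ)) ^ 2)⁻¹) • ((fderiv ℝ f (ivf σ)).comp D)) σ := by
    exact h4.comp_hasFDerivAt σ h3
  rw [h5.fderiv]
  have hDv : D v = fun i => -((σ i) ^ 2)⁻¹ * v i := by
    funext i
    simp [hD]
  simp only [ContinuousLinearMap.coe_smul', Pi.smul_apply, ContinuousLinearMap.coe_comp',
    Function.comp_apply, smul_eq_mul]
  rw [hDv, fderiv_f_apply]

lemma dual_pd1_diffAt (v : Fin n → ℝ) {τ : Fin n → ℝ} (hτ : τ ∈ PosCone n) :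
    DifferentiableAt ℝ (fun y => fderiv ℝ (dualF f) y v) τ := by
  have h0 : ContDiffAt ℝ (⊤ : ℕ∞) (dualF f) τ :=
    (dualF_contDiffOn hsmooth hpos).contDiffAt ((posCone_isOpen n).mem_nhds hτ)
  have h1 : ContDiffAt ℝ (⊤ : ℕ∞) (fderiv ℝ (dualF f)) τ := h0.fderiv_right haddtop
  exact (h1.differentiableAt h1top).clm_apply (differentiableAt_const _)

end Dual

section Hess2
variable {n : ℕ} {f : (Fin n → ℝ) → ℝ}
variable (hsmooth : ContDiffOn ℝ (⊤ : ℕ∞) f (PosCone n))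
    (hpos : ∀ κ ∈ PosCone n, 0 < f κ)
include hsmooth hpos

lemma hess_dual {κ : Fin n → ℝ} (hκ : κ ∈ PosCone n) (z : Fin n → ℝ) :
    fderiv ℝ (fun y => fderiv ℝ (dualF f) y (fun k => z k * ((κ k) ^ 2)⁻¹)) (ivf κ)
        (fun k => z k * ((κ k) ^ 2)⁻¹)
      = ((f κ)⁻¹) ^ 2 * (2 * (f κ)⁻¹ * (∑ k, pd1 f k κ * z k) ^ 2
          - (∑ k, ∑ l, pd2 f k l κ * z k * z l)
          - 2 * ∑ k, pd1 f k κ * z k ^ 2 * (κ k)⁻¹) := by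
  have hκ0 : ∀ i, κ i ≠ 0 := fun i => ne_of_gt (hκ i)
  have hfκ : f κ ≠ 0 := ne_of_gt (hpos κ hκ)
  set τ : Fin n → ℝ := ivf κ with hτdef
  have hτ : τ ∈ PosCone n := ivf_mem hκ
  have hτ0 : ∀ i, τ i ≠ 0 := fun i => ne_of_gt (hτ i)
  set v : Fin n → ℝ := fun k => z k * ((κ k) ^ 2)⁻¹ with hvdef
  set S : ℝ := ∑ k, pd1 f k κ * z k with hS
  have hmem : ∀ᶠ t : ℝ in nhds 0, τ + t • v ∈ PosCone n := by
    have hcont : Continuous (fun t : ℝ => τ + t • v) := by fun_prop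
    exact (hcont.continuousAt).preimage_mem_nhds
      ((posCone_isOpen n).mem_nhds (by simpa using hτ))
  have hψ : HasDerivAt (fun t : ℝ => fderiv ℝ (dualF f) (τ + t • v) v)
      (fderiv ℝ (fun y => fderiv ℝ (dualF f) y v) τ v) 0 := by
    have := hasDerivAt_line (g := fun y => fderiv ℝ (dualF f) y v) (x := τ) (v := v) (t := (0:ℝ))
      (by simpa using dual_pd1_diffAt hsmooth hpos v hτ)
    simpa using this
  have heq : (fun t : ℝ => fderiv ℝ (dualF f) (τ + t • v) v)
      =ᶠ[nhds (0:ℝ)] (fun t => -((f (ivf (τ + t • v))) ^ 2)⁻¹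
          * ∑ k, (-(((τ + t • v) k) ^ 2)⁻¹ * v k) * pd1 f k (ivf (τ + t • v))) := by
    filter_upwards [hmem] with t ht
    exact fderiv_dual_apply hsmooth hpos ht v
  have hw0 : ivf (τ + (0:ℝ) • v) = κ := by
    funext i; simp [hτdef]
  have hw : HasDerivAt (fun t : ℝ => ivf (τ + t • v)) (fun l => -z l) 0 := by
    rw [hasDerivAt_pi]
    intro i
    have hinner : HasDerivAt (fun t : ℝ => τ i + t * v i) (v i) 0 := by
      simpa using ((hasDerivAt_id (0:ℝ)).mul_const (v i)).const_add (τ i)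
    have hne : τ i + 0 * v i ≠ 0 := by simpa using hτ0 i
    have h2 := hinner.inv hne
    have h3 : -(v i) / (τ i + 0 * v i) ^ 2 = -z i := by
      simp only [hτdef, hvdef, ivf_apply, zero_mul, add_zero]
      field_simp [hκ0 i]
    rw [h3] at h2
    exact h2
  have hF : HasDerivAt (fun t : ℝ => f (ivf (τ + t • v))) (-S) 0 := by
    have hfd : HasFDerivAt f (fderiv ℝ f κ) (ivf (τ + (0:ℝ) • v)) := by
      rw [hw0]; exact (f_diffAt hsmooth hκ).hasFDerivAt
    have h2 := hfd.comp_hasDerivAt (0:ℝ) hw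
    have h3 : fderiv ℝ f κ (fun l => -z l) = -S := by
      rw [fderiv_f_apply, hS, ← Finset.sum_neg_distrib]
      apply Finset.sum_congr rfl; intro k _; ring
    rw [h3] at h2
    exact h2
  have hP : ∀ k : Fin n, HasDerivAt (fun t : ℝ => pd1 f k (ivf (τ + t • v)))
      (-(∑ l, z l * pd2 f k l κ)) 0 := by
    intro k
    have hfd : HasFDerivAt (fun y => fderiv ℝ f y (Pi.single k 1))
        (fderiv ℝ (fun y => fderiv ℝ f y (Pi.single k 1)) κ) (ivf (τ + (0:ℝ) • v)) := by
      rw [hw0]; exact (pd1_diffAt hsmooth k hκ).hasFDerivAt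
    have h2 := hfd.comp_hasDerivAt (0:ℝ) hw
    have h3 : fderiv ℝ (fun y => fderiv ℝ f y (Pi.single k 1)) κ (fun l => -z l)
        = -(∑ l, z l * pd2 f k l κ) := by
      rw [fderiv_pd1_apply, ← Finset.sum_neg_distrib]
      apply Finset.sum_congr rfl; intro l _; ring
    rw [h3] at h2
    exact h2
  have hc : ∀ k : Fin n, HasDerivAt (fun t : ℝ => -(((τ + t • v) k) ^ 2)⁻¹ * v k)
      (2 * z k ^ 2 * (κ k)⁻¹) 0 := by
    intro k
    have hinner : HasDerivAt (fun t : ℝ => τ k + t * v k) (v k) 0 := by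
      simpa using ((hasDerivAt_id (0:ℝ)).mul_const (v k)).const_add (τ k)
    have hne : (τ k + 0 * v k) ^ 2 ≠ 0 := pow_ne_zero _ (by simpa using hτ0 k)
    have h2 := (((hinner.fun_pow 2).fun_inv hne).fun_neg).mul_const (v k)
    convert h2 using 1
    · rfl
    · rfl
    · rfl
    simp only [hτdef, hvdef, ivf_apply, zero_mul, add_zero, pow_one, Nat.cast_ofNat]
    field_simp [hκ0 k]
    ring_nf
    field_simp [hκ0 k]
  have hsum : HasDerivAt
      (fun t : ℝ => ∑ k, (-(((τ + t • v) k) ^ 2)⁻¹ * v k) * pd1 f k (ivf (τ + t • v)))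
      (∑ k, (2 * z k ^ 2 * (κ k)⁻¹ * pd1 f k κ + z k * ∑ l, z l * pd2 f k l κ)) 0 := by
    refine HasDerivAt.fun_sum ?_
    intro k _
    have h3 := (hc k).fun_mul (hP k)
    convert h3 using 1
    · rfl
    simp only [hw0]
    simp only [hw0, Pi.add_apply, Pi.smul_apply, smul_eq_mul, zero_mul, add_zero,
      mul_zero, hτdef, hvdef, ivf_apply]
    field_simp [hκ0 k]
  have houter : HasDerivAt (fun t : ℝ => -((f (ivf (τ + t • v))) ^ 2)⁻¹)
      (-(2 * S * ((f κ)⁻¹) ^ 3)) 0 := by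
    have hne : (f (ivf (τ + (0:ℝ) • v))) ^ 2 ≠ 0 := by
      rw [hw0]; exact pow_ne_zero _ hfκ
    have h2 := ((hF.fun_pow 2).fun_inv hne).fun_neg
    convert h2 using 1
    · rfl
    · rfl
    simp only [hw0, pow_one, Nat.cast_ofNat]
    field_simp [hfκ]
    ring
  have hsum0 : ∑ k, (-(((τ + (0:ℝ) • v) k) ^ 2)⁻¹ * v k) * pd1 f k (ivf (τ + (0:ℝ) • v))
      = -S := by
    rw [hS, ← Finset.sum_neg_distrib]
    apply Finset.sum_congr rfl
    intro k _
    simp only [hw0]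
    simp only [hw0, Pi.add_apply, Pi.smul_apply, smul_eq_mul, zero_mul, add_zero,
      hτdef, hvdef, ivf_apply]
    field_simp [hκ0 k]
  have hA : HasDerivAt (fun t : ℝ => -((f (ivf (τ + t • v))) ^ 2)⁻¹
      * ∑ k, (-(((τ + t • v) k) ^ 2)⁻¹ * v k) * pd1 f k (ivf (τ + t • v)))
      (((f κ)⁻¹) ^ 2 * (2 * (f κ)⁻¹ * S ^ 2
          - (∑ k, ∑ l, pd2 f k l κ * z k * z l)
          - 2 * ∑ k, pd1 f k κ * z k ^ 2 * (κ k)⁻¹)) 0 := by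
    have h2 := houter.fun_mul hsum
    convert h2 using 1
    · rfl
    · rfl
    have e1 : ∑ k, (2 * z k ^ 2 * (κ k)⁻¹ * pd1 f k κ + z k * ∑ l, z l * pd2 f k l κ)
        = 2 * (∑ k, pd1 f k κ * z k ^ 2 * (κ k)⁻¹) + ∑ k, ∑ l, pd2 f k l κ * z k * z l := by
      rw [Finset.sum_add_distrib]
      congr 1
      · rw [Finset.mul_sum]; apply Finset.sum_congr rfl; intro k _; ring
      · apply Finset.sum_congr rfl; intro k _
        rw [Finset.mul_sum]; apply Finset.sum_congr rfl; intro l _; ring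
    rw [hsum0, hw0, e1]
    field_simp [hfκ]
    ring
  have h4 := hA.congr_of_eventuallyEq heq
  exact hψ.unique h4
end Hess2

section Final
variable {n : ℕ} {f : (Fin n → ℝ) → ℝ}
variable (hsmooth : ContDiffOn ℝ (⊤ : ℕ∞) f (PosCone n))
    (hhom : ∀ t : ℝ, 0 < t → ∀ κ ∈ PosCone n, f (t • κ) = t * f κ)
include hsmooth hhom

lemma eulerA {κ : Fin n → ℝ} (hκ : κ ∈ PosCone n) : ∑ k, κ k * pd1 f k κ = f κ := by
  have h := euler1 hsmooth hhom hκ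
  rwa [fderiv_f_apply] at h

lemma eulerB (k : Fin n) {κ : Fin n → ℝ} (hκ : κ ∈ PosCone n) :
    ∑ l, κ l * pd2 f k l κ = 0 := by
  have h := euler2 hsmooth hhom k hκ
  rwa [fderiv_pd1_apply] at h

lemma eulerC (l : Fin n) {κ : Fin n → ℝ} (hκ : κ ∈ PosCone n) :
    ∑ k, κ k * pd2 f k l κ = 0 := by
  rw [Finset.sum_congr rfl fun k _ => by rw [pd2_symm hsmooth k l hκ]]
  exact eulerB hsmooth hhom l hκ

end Final

/-- For `f` smooth, symmetric, positive and 1-homogeneous on `Γ₊`, `f` is inverse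
concave (i.e. `f_*` is concave on `Γ₊`) iff the matrix
`(∂²f/∂κ_k∂κ_l) + 2 (∂f/∂κ_k / κ_k) δ_{kl}` is positive semidefinite at every `κ ∈ Γ₊`. -/
theorem inverse_concave_iff_matrix (n : ℕ) (f : (Fin n → ℝ) → ℝ)
    (hsmooth : ContDiffOn ℝ (⊤ : ℕ∞) f (PosCone n))
    (hsym : ∀ σ : Equiv.Perm (Fin n), ∀ κ ∈ PosCone n, f (κ ∘ σ) = f κ)
    (hpos : ∀ κ ∈ PosCone n, 0 < f κ)
    (hhom : ∀ t : ℝ, 0 < t → ∀ κ ∈ PosCone n, f (t • κ) = t * f κ) :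
    ConcaveOn ℝ (PosCone n) (dualF f) ↔
      ∀ κ ∈ PosCone n, ∀ z : Fin n → ℝ,
        0 ≤ ∑ k : Fin n, ∑ l : Fin n,
          (pd2 f k l κ + 2 * (pd1 f k κ / κ k) * (if k = l then 1 else 0)) * z k * z l := by
  rw [concaveOn_iff_hess (posCone_isOpen n) (posCone_convex n) (dualF_contDiffOn hsmooth hpos)]
  have hsimp : ∀ κ ∈ PosCone n, ∀ z : Fin n → ℝ,
      ∑ k : Fin n, ∑ l : Fin n,
          (pd2 f k l κ + 2 * (pd1 f k κ / κ k) * (if k = l then 1 else 0)) * z k * z l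
        = (∑ k, ∑ l, pd2 f k l κ * z k * z l)
          + 2 * ∑ k, pd1 f k κ * z k ^ 2 * (κ k)⁻¹ := by
    intro κ hκ z
    have hκ0 : ∀ i, κ i ≠ 0 := fun i => ne_of_gt (hκ i)
    have hper : ∀ k : Fin n,
        ∑ l, (pd2 f k l κ + 2 * (pd1 f k κ / κ k) * (if k = l then 1 else 0)) * z k * z l
        = (∑ l, pd2 f k l κ * z k * z l) + 2 * (pd1 f k κ * z k ^ 2 * (κ k)⁻¹) := by
      intro k
      have e1 : ∀ l : Fin n,
          (pd2 f k l κ + 2 * (pd1 f k κ / κ k) * (if k = l then 1 else 0)) * z k * z l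
          = pd2 f k l κ * z k * z l
            + (if k = l then 2 * (pd1 f k κ * z k ^ 2 * (κ k)⁻¹) else 0) := by
        intro l
        by_cases h : k = l
        · subst h
          simp only [eq_self_iff_true, if_true]
          field_simp
        · simp only [if_neg h]
          ring
      rw [Finset.sum_congr rfl (fun l _ => e1 l), Finset.sum_add_distrib, Finset.sum_ite_eq]
      simp
    rw [Finset.sum_congr rfl (fun k _ => hper k), Finset.sum_add_distrib, ← Finset.mul_sum]
  constructor
  · intro h κ hκ z
    have h1 := h (ivf κ) (ivf_mem hκ) (fun k => z k * ((κ k) ^ 2)⁻¹)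
    rw [hess_dual hsmooth hpos hκ z] at h1
    rw [hsimp κ hκ z]
    have hf := hpos κ hκ
    have hfi : 0 < (f κ)⁻¹ := inv_pos.2 hf
    have hp2 : 0 < ((f κ)⁻¹) ^ 2 := pow_pos hfi 2
    set S := ∑ k, pd1 f k κ * z k with hS
    set Q := ∑ k, ∑ l, pd2 f k l κ * z k * z l with hQ
    set T := ∑ k, pd1 f k κ * z k ^ 2 * (κ k)⁻¹ with hT
    have hX : 2 * (f κ)⁻¹ * S ^ 2 - Q - 2 * T ≤ 0 := by
      by_contra h'
      push_neg at h'
      nlinarith [mul_pos hp2 h']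
    nlinarith [sq_nonneg S, mul_pos hfi (mul_pos hfi hf)]
  · intro h τ hτ v
    have hκ : ivf τ ∈ PosCone n := ivf_mem hτ
    set κ : Fin n → ℝ := ivf τ with hκdef
    have hκ0 : ∀ i, κ i ≠ 0 := fun i => ne_of_gt (hκ i)
    set z : Fin n → ℝ := fun k => v k * ((τ k) ^ 2)⁻¹ with hzdef
    have hveq : v = fun k => z k * ((κ k) ^ 2)⁻¹ := by
      funext k
      have hτk : τ k ≠ 0 := ne_of_gt (hτ k)
      simp only [hzdef, hκdef, ivf_apply]
      field_simp
    have hτeq : τ = ivf κ := by rw [hκdef, ivf_ivf]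
    rw [hveq, hτeq, hess_dual hsmooth hpos hκ z]
    set S := ∑ k, pd1 f k κ * z k with hS
    set Q := ∑ k, ∑ l, pd2 f k l κ * z k * z l with hQ
    set T := ∑ k, pd1 f k κ * z k ^ 2 * (κ k)⁻¹ with hT
    have hf := hpos κ hκ
    set c : ℝ := S * (f κ)⁻¹ with hc
    set z' : Fin n → ℝ := fun k => z k - c * κ k with hz'def
    have h2 := h κ hκ z'
    rw [hsimp κ hκ z'] at h2
    have hQid : ∑ k, ∑ l, pd2 f k l κ * z' k * z' l = Q := by
      have hinner : ∀ k, ∑ l, pd2 f k l κ * z' k * z' l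
          = ∑ l, pd2 f k l κ * z' k * z l := by
        intro k
        have e : ∀ l : Fin n, pd2 f k l κ * z' k * z' l
            = pd2 f k l κ * z' k * z l - (c * z' k) * (κ l * pd2 f k l κ) := by
          intro l; simp only [hz'def]; ring
        rw [Finset.sum_congr rfl (fun l _ => e l), Finset.sum_sub_distrib, ← Finset.mul_sum,
          eulerB hsmooth hhom k hκ, mul_zero, sub_zero]
      have houter : ∀ l, ∑ k, pd2 f k l κ * z' k * z l
          = ∑ k, pd2 f k l κ * z k * z l := by
        intro l
        have e : ∀ k : Fin n, pd2 f k l κ * z' k * z l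
            = pd2 f k l κ * z k * z l - (c * z l) * (κ k * pd2 f k l κ) := by
          intro k; simp only [hz'def]; ring
        rw [Finset.sum_congr rfl (fun k _ => e k), Finset.sum_sub_distrib, ← Finset.mul_sum,
          eulerC hsmooth hhom l hκ, mul_zero, sub_zero]
      calc ∑ k, ∑ l, pd2 f k l κ * z' k * z' l
          = ∑ k, ∑ l, pd2 f k l κ * z' k * z l :=
            Finset.sum_congr rfl (fun k _ => hinner k)
        _ = ∑ l, ∑ k, pd2 f k l κ * z' k * z l := Finset.sum_comm
        _ = ∑ l, ∑ k, pd2 f k l κ * z k * z l :=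
            Finset.sum_congr rfl (fun l _ => houter l)
        _ = Q := by rw [hQ]; exact Finset.sum_comm
    have hTid : ∑ k, pd1 f k κ * z' k ^ 2 * (κ k)⁻¹ = T - 2 * c * S + c ^ 2 * f κ := by
      have e : ∀ k : Fin n, pd1 f k κ * z' k ^ 2 * (κ k)⁻¹
          = pd1 f k κ * z k ^ 2 * (κ k)⁻¹ - 2 * c * (pd1 f k κ * z k)
            + c ^ 2 * (κ k * pd1 f k κ) := by
        intro k
        simp only [hz'def]
        field_simp [hκ0 k]
        ring
      rw [Finset.sum_congr rfl (fun k _ => e k), Finset.sum_add_distrib,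
        Finset.sum_sub_distrib, ← Finset.mul_sum, ← Finset.mul_sum,
        eulerA hsmooth hhom hκ, ← hS, ← hT]
    rw [hQid, hTid] at h2
    have hcs : c * S = S ^ 2 * (f κ)⁻¹ := by rw [hc]; ring
    have hc2 : c ^ 2 * f κ = S ^ 2 * (f κ)⁻¹ := by
      rw [hc]; field_simp
    have hX : 2 * (f κ)⁻¹ * S ^ 2 - Q - 2 * T ≤ 0 := by nlinarith [h2, hcs, hc2]
    have hp2 : (0:ℝ) ≤ ((f κ)⁻¹) ^ 2 := sq_nonneg _
    calc ((f κ)⁻¹) ^ 2 * (2 * (f κ)⁻¹ * S ^ 2 - Q - 2 * T)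
        ≤ ((f κ)⁻¹) ^ 2 * 0 := by
          exact mul_le_mul_of_nonneg_left hX hp2
      _ = 0 := by ring
end

section
/- Let f : Γ_+ → ℝ be smooth, symmetric, positive, and inverse concave. Then for every κ ∈ Γ_+ and all indices k ≠ l with κ_k ≠ κ_l one has ((∂f/∂κ_k)(κ) − (∂f/∂κ_l)(κ))/(κ_k − κ_l) + (∂f/∂κ_k)(κ)/κ_l + (∂f/∂κ_l)(κ)/κ_k ≥ 0. -/
open Finset

/-- If `f` is smooth, symmetric, positive and inverse concave on `Γ₊`, then for `k ≠ l`
with `κ_k ≠ κ_l`, `(∂f/∂κ_k − ∂f/∂κ_l)/(κ_k − κ_l) + (∂f/∂κ_k)/κ_l + (∂f/∂κ_l)/κ_k ≥ 0`. -/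
theorem inverse_concave_offdiag (n : ℕ) (f : (Fin n → ℝ) → ℝ)
    (hsmooth : ContDiffOn ℝ (⊤ : ℕ∞) f (PosCone n))
    (hsym : ∀ σ : Equiv.Perm (Fin n), ∀ κ ∈ PosCone n, f (κ ∘ σ) = f κ)
    (hpos : ∀ κ ∈ PosCone n, 0 < f κ)
    (hinvconc : ConcaveOn ℝ (PosCone n) (dualF f)) :
    ∀ κ ∈ PosCone n, ∀ k l : Fin n, k ≠ l → κ k ≠ κ l →
      0 ≤ (pd1 f k κ - pd1 f l κ) / (κ k - κ l) + pd1 f k κ / κ l + pd1 f l κ / κ k := by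
  intro κ hκ k l hkl hne
  have hκk := hκ k
  have hκl := hκ l
  set τ : Fin n → ℝ := fun i => (κ i)⁻¹ with hτdef
  have hτpos : ∀ i, 0 < τ i := fun i => inv_pos.2 (hκ i)
  have hτmem : τ ∈ PosCone n := hτpos
  have hκeq : (fun i => (τ i)⁻¹) = κ := by funext i; simp [hτdef]
  set σ := Equiv.swap k l with hσdef
  have hτ'mem : τ ∘ σ ∈ PosCone n := fun i => hτpos (σ i)
  -- symmetry of the dual
  have hgsym : dualF f (τ ∘ σ) = dualF f τ := by
    unfold dualF
    congr 1
    have h1 : (fun i => ((τ ∘ σ) i)⁻¹) = κ ∘ σ := by funext i; simp [hτdef]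
    rw [h1, hκeq, hsym σ κ hκ]
  -- concavity along the segment
  have hseg : ∀ t ∈ Set.Icc (0:ℝ) 1, dualF f τ ≤ dualF f (τ + t • (τ ∘ σ - τ)) := by
    intro t ht
    have h := hinvconc.2 hτmem hτ'mem (by linarith [ht.2] : (0:ℝ) ≤ 1 - t) ht.1
      (by ring)
    have heq : (1 - t) • τ + t • (τ ∘ σ) = τ + t • (τ ∘ σ - τ) := by
      funext i
      simp only [Pi.add_apply, Pi.smul_apply, Pi.sub_apply, Function.comp_apply,
        smul_eq_mul]
      ring
    rw [heq] at h
    calc dualF f τ = (1 - t) • dualF f τ + t • dualF f τ := by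
          simp only [smul_eq_mul]; ring
      _ = (1 - t) • dualF f τ + t • dualF f (τ ∘ σ) := by rw [hgsym]
      _ ≤ _ := h
  -- the curve
  set w : Fin n → ℝ := fun i => τ (σ i) - τ i with hwdef
  set φ : ℝ → ℝ := fun t => (f (fun i => (τ i + t * w i)⁻¹))⁻¹ with hφdef
  have hφeq : ∀ t, φ t = dualF f (τ + t • (τ ∘ σ - τ)) := by
    intro t; rfl
  -- openness of the cone, differentiability of f
  have hopen : IsOpen (PosCone n) := by
    have h1 : PosCone n = ⋂ i, {x : Fin n → ℝ | 0 < x i} := by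
      ext x; simp [PosCone]
    rw [h1]
    exact isOpen_iInter_of_finite fun i =>
      isOpen_lt continuous_const (continuous_apply i)
  have hdf : DifferentiableAt ℝ f κ :=
    (hsmooth.contDiffAt (hopen.mem_nhds hκ)).differentiableAt (by simp)
  have hfκ : (0:ℝ) < f κ := hpos κ hκ
  -- derivative of the curve coordinates
  have hcinv : ∀ i, HasDerivAt (fun t : ℝ => (τ i + t * w i)⁻¹)
      (-(w i) / (τ i) ^ 2) 0 := by
    intro i
    have h1 : HasDerivAt (fun t : ℝ => τ i + t * w i) (w i) 0 :=
      (hasDerivAt_mul_const (w i)).const_add (τ i)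
    have h2 : τ i + 0 * w i ≠ 0 := by simpa using (hτpos i).ne'
    have h3 := h1.inv h2
    simp only [Pi.inv_def] at h3
    simpa using h3
  have hcurve : HasDerivAt (fun t : ℝ => fun i => (τ i + t * w i)⁻¹)
      (fun i => -(w i) / (τ i) ^ 2) 0 := hasDerivAt_pi.2 hcinv
  have hc0 : (fun i => (τ i + 0 * w i)⁻¹) = κ := by
    funext i; simp [hτdef]
  -- derivative of ψ = f ∘ curve
  have hF : HasFDerivAt f (fderiv ℝ f κ) ((fun t : ℝ => fun i => (τ i + t * w i)⁻¹) 0) := by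
    simp only []
    rw [hc0]
    exact hdf.hasFDerivAt
  have hψ : HasDerivAt (fun t : ℝ => f (fun i => (τ i + t * w i)⁻¹))
      (fderiv ℝ f κ (fun i => -(w i) / (τ i) ^ 2)) 0 :=
    hF.comp_hasDerivAt 0 hcurve
  set D : ℝ := -(fderiv ℝ f κ (fun i => -(w i) / (τ i) ^ 2)) / (f κ) ^ 2 with hDdef
  have hφ' : HasDerivAt φ D 0 := by
    have h2 : f (fun i => (τ i + 0 * w i)⁻¹) ≠ 0 := by
      rw [hc0]; exact hfκ.ne'
    have h3 := hψ.inv h2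
    have h4 : f (fun i => (τ i + 0 * w i)⁻¹) = f κ := by rw [hc0]
    rw [hDdef]
    simp only [Pi.inv_def] at h3
    rw [h4] at h3
    exact h3
  -- the derivative is nonnegative
  have hD : 0 ≤ D := by
    have h1 : HasDerivWithinAt φ D (Set.Ioi 0) 0 := hφ'.hasDerivWithinAt
    have h2 := hasDerivWithinAt_iff_tendsto_slope.1 h1
    have h3 : Set.Ioi (0:ℝ) \ {0} = Set.Ioi 0 := by
      apply Set.diff_singleton_eq_self; simp
    rw [h3] at h2
    refine ge_of_tendsto h2 ?_
    filter_upwards [Ioc_mem_nhdsGT_of_mem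
      (⟨le_refl (0:ℝ), zero_lt_one⟩ : (0:ℝ) ∈ Set.Ico 0 1)] with t ht
    have h4 := hseg t ⟨le_of_lt ht.1, ht.2⟩
    rw [← hφeq t] at h4
    have h5 : φ 0 = dualF f τ := by
      rw [hφeq 0]
      congr 1
      funext i; simp
    rw [slope_def_field]
    apply div_nonneg
    · rw [h5]; linarith
    · simp [le_of_lt ht.1]
  -- identify the directional derivative via linearity
  set Fk := pd1 f k κ with hFk
  set Fl := pd1 f l κ with hFl
  have hwk : w k = τ l - τ k := by simp [hwdef, hσdef]
  have hwl : w l = τ k - τ l := by simp [hwdef, hσdef]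
  have hv : (fun i => -(w i) / (τ i) ^ 2) =
      (-(w k) / (τ k) ^ 2) • (Pi.single k 1 : Fin n → ℝ) + (-(w l) / (τ l) ^ 2) • (Pi.single l 1 : Fin n → ℝ) := by
    funext i
    by_cases hik : i = k
    · subst hik; simp [Pi.single_apply, hkl, Ne.symm hkl]
    · by_cases hil : i = l
      · subst hil; simp [Pi.single_apply, hkl, Ne.symm hkl, hik]
      · have hwi : w i = 0 := by
          simp [hwdef, hσdef, Equiv.swap_apply_of_ne_of_ne hik hil]
        simp [Pi.single_apply, hik, hil, hwi]
  have hlin : fderiv ℝ f κ (fun i => -(w i) / (τ i) ^ 2)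
      = (-(w k) / (τ k) ^ 2) * Fk + (-(w l) / (τ l) ^ 2) * Fl := by
    rw [hv, map_add, map_smul, map_smul, smul_eq_mul, smul_eq_mul]
    rfl
  -- translate to the κ variables
  have hX : (-(w k) / (τ k) ^ 2) * Fk + (-(w l) / (τ l) ^ 2) * Fl ≤ 0 := by
    rw [← hlin]
    have hsq : (0:ℝ) < (f κ) ^ 2 := by positivity
    by_contra hcon
    push_neg at hcon
    have : D < 0 := by
      rw [hDdef]
      apply div_neg_of_neg_of_pos _ hsq
      linarith
    linarith
  have hτk : τ k = (κ k)⁻¹ := rfl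
  have hτl : τ l = (κ l)⁻¹ := rfl
  have hkey : 0 ≤ (κ k - κ l) * ((κ k) ^ 2 * Fk - (κ l) ^ 2 * Fl) := by
    rw [hwk, hwl, hτk, hτl] at hX
    have hκk' : (κ k) ≠ 0 := hκk.ne'
    have hκl' : (κ l) ≠ 0 := hκl.ne'
    have h6 : 0 < κ k * κ l := mul_pos hκk hκl
    have hX2 : ((κ l - κ k) * ((κ k) ^ 2 * Fk) + (κ k - κ l) * ((κ l) ^ 2 * Fl))
        / (κ k * κ l) ≤ 0 := by
      have heq : ((κ l - κ k) * ((κ k) ^ 2 * Fk) + (κ k - κ l) * ((κ l) ^ 2 * Fl))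
          / (κ k * κ l)
          = (-(((κ l)⁻¹ - (κ k)⁻¹)) / ((κ k)⁻¹) ^ 2) * Fk +
            (-(((κ k)⁻¹ - (κ l)⁻¹)) / ((κ l)⁻¹) ^ 2) * Fl := by
        field_simp
        ring
      rw [heq]; exact hX
    have hnum : (κ l - κ k) * ((κ k) ^ 2 * Fk) + (κ k - κ l) * ((κ l) ^ 2 * Fl) ≤ 0 := by
      have h8 : (κ l - κ k) * ((κ k) ^ 2 * Fk) + (κ k - κ l) * ((κ l) ^ 2 * Fl)
          = (((κ l - κ k) * ((κ k) ^ 2 * Fk) + (κ k - κ l) * ((κ l) ^ 2 * Fl))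
            / (κ k * κ l)) * (κ k * κ l) := by
        field_simp
      rw [h8]
      exact mul_nonpos_of_nonpos_of_nonneg hX2 h6.le
    nlinarith [hnum]
  -- final algebra
  have hd : κ k - κ l ≠ 0 := sub_ne_zero.2 hne
  have hκk' : (κ k) ≠ 0 := hκk.ne'
  have hκl' : (κ l) ≠ 0 := hκl.ne'
  have hT : (Fk - Fl) / (κ k - κ l) + Fk / κ l + Fl / κ k
      = ((κ k - κ l) * ((κ k) ^ 2 * Fk - (κ l) ^ 2 * Fl)) /
        ((κ k - κ l) ^ 2 * (κ k * κ l)) := by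
    field_simp
    ring
  rw [hT]
  apply div_nonneg hkey
  have h7 : 0 < (κ k - κ l) ^ 2 := pow_two_pos_of_ne_zero hd
  positivity
end
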